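/- Let X be a compact metric space and let F ∪ P be a finite family of continuous self-maps on X with X = ⋃_{f∈F∪P} f(X). If F and P are both topologically contracting systems on X, and for every f ∈ F and p ∈ P the set f(p(X)) is a singleton, then (X, F ∪ P) is a topological fractal. -/

import Mathlib

open Set

/-- Composition of a list of self-maps. -/
def Comp {X : Type*} (l : List (X → X)) : X → X := l.foldr (· ∘ ·) id

/-- `F` is a topologically contracting system on `Y ⊆ X`. -/
def TopContracting {X : Type*} [TopologicalSpace X] (F : Set (X → X)) (Y : Set X) : Prop :=
  ∀ 𝒰 : Set (Set X), (∀ U ∈ 𝒰, IsOpen U) → Y ⊆ ⋃₀ 𝒰 →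
    ∃ n : ℕ, ∀ l : List (X → X), l.length = n → (∀ f ∈ l, f ∈ F) →
      ∃ U ∈ 𝒰, Comp l '' Y ⊆ U

/-- `(X, F)` is a topological fractal (whole-space version). -/
def TopFractal {X : Type*} [TopologicalSpace X] (F : Set (X → X)) : Prop :=
  F.Finite ∧ (∀ f ∈ F, Continuous f) ∧ (⋃ f ∈ F, Set.range f) = Set.univ ∧
    TopContracting F Set.univ

lemma Comp_nil {X : Type*} : Comp ([] : List (X → X)) = id := rfl

lemma Comp_cons {X : Type*} (f : X → X) (l : List (X → X)) :
    Comp (f :: l) = f ∘ Comp l := rfl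

lemma Comp_append {X : Type*} (a b : List (X → X)) :
    Comp (a ++ b) = Comp a ∘ Comp b := by
  induction a with
  | nil => rfl
  | cons f t ih => simp [Comp_cons, ih, Function.comp_assoc]

lemma Comp_continuous {X : Type*} [TopologicalSpace X] (l : List (X → X))
    (h : ∀ g ∈ l, Continuous g) : Continuous (Comp l) := by
  induction l with
  | nil => exact continuous_id
  | cons f t ih =>
    rw [Comp_cons]
    exact (h f (List.mem_cons_self)).comp (ih fun g hg => h g (List.mem_cons_of_mem _ hg))

/-- Contraction at exact length `n` implies contraction at all lengths `≥ n`. -/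
lemma contract_ge {X : Type*} [TopologicalSpace X] {F : Set (X → X)} {𝒰 : Set (Set X)} {n : ℕ}
    (h : ∀ l : List (X → X), l.length = n → (∀ f ∈ l, f ∈ F) → ∃ U ∈ 𝒰, Comp l '' univ ⊆ U) :
    ∀ l : List (X → X), n ≤ l.length → (∀ f ∈ l, f ∈ F) → ∃ U ∈ 𝒰, Comp l '' univ ⊆ U := by
  intro l hl hF
  obtain ⟨U, hU, hsub⟩ := h (l.take n) (by simp [List.length_take]; omega)
    (fun f hf => hF f (List.mem_of_mem_take hf))
  refine ⟨U, hU, ?_⟩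
  have h1 : Comp l = Comp (l.take n) ∘ Comp (l.drop n) := by
    rw [← Comp_append, List.take_append_drop]
  rw [h1, image_comp]
  exact (image_mono (subset_univ _)).trans hsub

/-- Either the list contains an `F`-map immediately followed by a `P`-map, or it splits as a
`P`-word followed by an `F`-word. -/
lemma split_lemma {X : Type*} {F P : Set (X → X)} :
    ∀ l : List (X → X), (∀ g ∈ l, g ∈ F ∪ P) →
      (∃ w f p t, l = w ++ f :: p :: t ∧ f ∈ F ∧ p ∈ P) ∨
      (∃ w r, l = w ++ r ∧ (∀ g ∈ w, g ∈ P) ∧ (∀ g ∈ r, g ∈ F)) := by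
  intro l
  induction l with
  | nil => intro _; right; exact ⟨[], [], rfl, by simp, by simp⟩
  | cons g t ih =>
    intro h
    rcases ih (fun x hx => h x (List.mem_cons_of_mem _ hx)) with
      ⟨w, f, p, t', hsplit, hf, hp⟩ | ⟨w, r, hsplit, hw, hr⟩
    · left; exact ⟨g :: w, f, p, t', by rw [hsplit]; rfl, hf, hp⟩
    · by_cases hg : g ∈ F
      · cases w with
        | nil =>
          right
          refine ⟨[], g :: r, by simp [hsplit], by simp, ?_⟩
          intro x hx
          rcases List.mem_cons.mp hx with rfl | hx
          · exact hg
          · exact hr x hx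
        | cons p w' =>
          left
          refine ⟨[], g, p, w' ++ r, by simp [hsplit], hg, hw p (List.mem_cons_self)⟩
      · right
        refine ⟨g :: w, r, by rw [hsplit]; rfl, ?_, hr⟩
        intro x hx
        rcases List.mem_cons.mp hx with rfl | hx
        · rcases h x (List.mem_cons_self) with hF | hP
          · exact absurd hF hg
          · exact hP
        · exact hw x hx

theorem stmt4 {X : Type*} [MetricSpace X] [CompactSpace X] (F P : Set (X → X))
    (hfin : (F ∪ P).Finite) (hcont : ∀ f ∈ F ∪ P, Continuous f)
    (hcover : (⋃ f ∈ F ∪ P, Set.range f) = Set.univ)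
    (hFc : TopContracting F Set.univ) (hPc : TopContracting P Set.univ)
    (hsing : ∀ f ∈ F, ∀ p ∈ P, ∃ x : X, f '' Set.range p = {x}) :
    TopFractal (F ∪ P) := by
  classical
  refine ⟨hfin, hcont, hcover, ?_⟩
  intro 𝒰 hopen hcov
  obtain ⟨nP, hnP⟩ := hPc 𝒰 hopen hcov
  have hPcontmap : ∀ w : List (X → X), (∀ g ∈ w, g ∈ P) → Continuous (Comp w) :=
    fun w hw => Comp_continuous w (fun g hg => hcont g (Or.inr (hw g hg)))
  -- key: for each P-word w, long F-words appended give small images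
  have key : ∀ w : List (X → X), (∀ g ∈ w, g ∈ P) →
      ∃ m, ∀ l : List (X → X), m ≤ l.length → (∀ f ∈ l, f ∈ F) →
        ∃ U ∈ 𝒰, Comp (w ++ l) '' univ ⊆ U := by
    intro w hw
    obtain ⟨m, hm⟩ := hFc ((fun U => Comp w ⁻¹' U) '' 𝒰)
      (by rintro _ ⟨U, hU, rfl⟩; exact (hopen U hU).preimage (hPcontmap w hw))
      (by
        intro x _
        obtain ⟨U, hU, hx⟩ := hcov (mem_univ (Comp w x))
        exact ⟨_, ⟨U, hU, rfl⟩, hx⟩)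
    refine ⟨m, ?_⟩
    intro l hl hF
    obtain ⟨V, hV, hsub⟩ := contract_ge hm l hl hF
    obtain ⟨U, hU, rfl⟩ := hV
    refine ⟨U, hU, ?_⟩
    rw [Comp_append, image_comp]
    exact (image_mono hsub).trans (image_preimage_subset _ _)
  choose nf hnf using key
  -- uniform bound over short P-words
  set W : Set (List (X → X)) := {w | w.length ≤ nP ∧ ∀ x ∈ w, x ∈ P} with hWdef
  have hPfin : P.Finite := hfin.subset subset_union_right
  have hWfin : W.Finite := by
    haveI := hPfin.to_subtype
    have hS : ((fun l : List ↥P => l.map Subtype.val) ''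
        {l : List ↥P | l.length ≤ nP}).Finite :=
      (List.finite_length_le ↥P nP).image _
    refine hS.subset ?_
    rintro w ⟨hwlen, hwP⟩
    refine ⟨w.attach.map (fun x => (⟨x.1, hwP x.1 x.2⟩ : ↥P)), by simpa using hwlen, ?_⟩
    simp [List.map_map]
  let gn : List (X → X) → ℕ := fun w => if h : ∀ x ∈ w, x ∈ P then nf w h else 0
  obtain ⟨b, hb⟩ : ∃ b, ∀ w ∈ W, gn w ≤ b := by
    obtain ⟨b, hb⟩ := (hWfin.image gn).bddAbove
    exact ⟨b, fun w hw => hb ⟨w, hw, rfl⟩⟩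
  refine ⟨nP + b + 1, ?_⟩
  intro l hl hmem
  rcases split_lemma (F := F) (P := P) l hmem with
    ⟨w, f, p, t, rfl, hf, hp⟩ | ⟨w, r, rfl, hw, hr⟩
  · -- singleton case
    obtain ⟨x, hx⟩ := hsing f hf p hp
    have hsub : Comp (w ++ f :: p :: t) '' univ ⊆ {Comp w x} := by
      rw [Comp_append, Comp_cons, Comp_cons, image_comp, image_comp, image_comp]
      refine (image_mono ?_).trans (by rw [image_singleton])
      refine (image_mono (f := f) ?_).trans hx.le
      exact (image_subset_range _ _).trans (by rw [← image_univ])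
    obtain ⟨U, hU, hxU⟩ := hcov (mem_univ (Comp w x))
    exact ⟨U, hU, hsub.trans (singleton_subset_iff.mpr hxU)⟩
  · by_cases hlen : nP ≤ w.length
    · -- long P-prefix
      obtain ⟨U, hU, hsub⟩ := hnP (w.take nP) (by simp [List.length_take]; omega)
        (fun x hx => hw x (List.mem_of_mem_take hx))
      refine ⟨U, hU, ?_⟩
      have h1 : Comp (w ++ r) = Comp (w.take nP) ∘ Comp (w.drop nP ++ r) := by
        rw [← Comp_append, ← List.append_assoc, List.take_append_drop]
      rw [h1, image_comp]
      exact (image_mono (subset_univ _)).trans hsub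
    · -- short P-prefix, long F-suffix
      have hwW : w ∈ W := ⟨by omega, hw⟩
      have hgw : nf w hw ≤ b := by
        have := hb w hwW
        simpa [gn, dif_pos hw] using this
      have hrlen : nf w hw ≤ r.length := by
        have := hl
        rw [List.length_append] at this
        omega
      exact hnf w hw r hrlen hr
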